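/- For every real s > 1, the prime zeta function satisfies P(s) = ∑_{k=1}^∞ μ(k)·log(ζ(sk))/k, where μ is the Möbius function and ζ the Riemann zeta function. -/

import Mathlib

open Real ArithmeticFunction

lemma zetaR_summable {t : ℝ} (ht : 1 < t) : Summable (fun m : ℕ => ((m : ℝ) + 1) ^ (-t)) := by
  have h := Real.summable_nat_rpow.mpr (show -t < -1 by linarith)
  exact (h.comp_injective (add_right_injective 1)).congr fun m => by
    simp [Function.comp]; norm_num [add_comm]

lemma prime_rpow_lt_one {t : ℝ} (ht : 1 < t) (p : Nat.Primes) : ((p : ℕ) : ℝ) ^ (-t) < 1 :=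
  Real.rpow_lt_one_of_one_lt_of_neg (by exact_mod_cast p.prop.one_lt) (by linarith)

lemma prime_rpow_le_half {t : ℝ} (ht : 1 < t) (p : Nat.Primes) :
    ((p : ℕ) : ℝ) ^ (-t) ≤ 1 / 2 := by
  have h2 : (2 : ℝ) ≤ ((p : ℕ) : ℝ) := by exact_mod_cast p.prop.two_le
  calc ((p : ℕ) : ℝ) ^ (-t) ≤ (2 : ℝ) ^ (-t) := by
        rw [Real.rpow_neg (by linarith), Real.rpow_neg (by norm_num)]
        exact inv_anti₀ (Real.rpow_pos_of_pos (by norm_num) t)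
          (Real.rpow_le_rpow (by norm_num) h2 (by linarith))
    _ ≤ (2 : ℝ) ^ (-1 : ℝ) := Real.rpow_le_rpow_of_exponent_le (by norm_num) (by linarith)
    _ = 1 / 2 := by norm_num [Real.rpow_neg_one]

lemma summable_neg_log_one_sub {t : ℝ} (ht : 1 < t) :
    Summable (fun p : Nat.Primes => -Real.log (1 - ((p : ℕ) : ℝ) ^ (-t))) := by
  have hsp : Summable (fun p : Nat.Primes => ((p : ℕ) : ℝ) ^ (-t)) :=
    Nat.Primes.summable_rpow.mpr (by linarith)
  refine (hsp.mul_left 2).of_nonneg_of_le (fun p => ?_) (fun p => ?_)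
  · have h1 := prime_rpow_lt_one ht p
    have h0 : (0 : ℝ) ≤ ((p : ℕ) : ℝ) ^ (-t) := by positivity
    simp only [neg_nonneg]
    exact Real.log_nonpos (by linarith) (by linarith)
  · have h1 := prime_rpow_lt_one ht p
    have h0 : (0 : ℝ) ≤ ((p : ℕ) : ℝ) ^ (-t) := by positivity
    have hhalf := prime_rpow_le_half ht p
    set x := ((p : ℕ) : ℝ) ^ (-t)
    have hx1 : (0 : ℝ) < 1 - x := by linarith
    have hlogeq : -Real.log (1 - x) = Real.log (1 - x)⁻¹ := by rw [Real.log_inv]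
    rw [hlogeq]
    have hinv : (1 - x)⁻¹ ≤ 1 + 2 * x := by
      rw [inv_le_iff_one_le_mul₀ (by linarith)]
      nlinarith
    calc Real.log (1 - x)⁻¹ ≤ Real.log (1 + 2 * x) :=
          Real.log_le_log (by positivity) hinv
      _ ≤ 2 * x := by
          linarith [Real.log_le_sub_one_of_pos (show (0:ℝ) < 1 + 2 * x by linarith)]

lemma log_zetaR {t : ℝ} (ht : 1 < t) :
    Real.log (∑' m : ℕ, ((m : ℝ) + 1) ^ (-t)) =
      ∑' p : Nat.Primes, -Real.log (1 - ((p : ℕ) : ℝ) ^ (-t)) := by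
  set A := ∑' p : Nat.Primes, -Real.log (1 - ((p : ℕ) : ℝ) ^ (-t)) with hA
  have hsC : 1 < ((t : ℂ)).re := by simpa using ht
  have H := riemannZeta_eulerProduct_exp_log hsC
  rw [zeta_eq_tsum_one_div_nat_add_one_cpow hsC] at H
  have hterm : ∀ p : Nat.Primes,
      -Complex.log (1 - (p : ℂ) ^ (-(t : ℂ))) =
        ((-Real.log (1 - ((p : ℕ) : ℝ) ^ (-t)) : ℝ) : ℂ) := by
    intro p
    have hpc : ((p : ℕ) : ℂ) ^ (-(t : ℂ)) = ((((p : ℕ) : ℝ) ^ (-t) : ℝ) : ℂ) := by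
      rw [Complex.ofReal_cpow (by positivity)]; norm_cast
    have h1 : (1 : ℂ) - (p : ℂ) ^ (-(t : ℂ)) = ((1 - ((p : ℕ) : ℝ) ^ (-t) : ℝ) : ℂ) := by
      push_cast [hpc]; ring
    rw [h1, Complex.ofReal_neg, ← Complex.ofReal_log (by linarith [prime_rpow_lt_one ht p])]
  rw [tsum_congr hterm, ← Complex.ofReal_tsum, ← hA, ← Complex.ofReal_exp] at H
  have hR : (∑' n : ℕ, 1 / ((n : ℂ) + 1) ^ (t : ℂ)) =
      ((∑' m : ℕ, ((m : ℝ) + 1) ^ (-t) : ℝ) : ℂ) := by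
    rw [Complex.ofReal_tsum]
    refine tsum_congr fun n => ?_
    rw [Complex.ofReal_cpow (by positivity)]
    push_cast
    rw [Complex.cpow_neg, one_div]
  rw [hR] at H
  have := Complex.ofReal_injective H
  rw [← this, Real.log_exp]

def tripleEquiv : (ℕ × (Nat.Primes × ℕ)) ≃ (Nat.Primes × (ℕ × ℕ)) :=
  ⟨fun r => (r.2.1, r.1, r.2.2), fun q => (q.2.1, q.1, q.2.2),
    fun r => rfl, fun q => rfl⟩

def divEquiv : (ℕ × ℕ) ≃ (Σ m : ℕ, {d : ℕ × ℕ // d ∈ Nat.divisorsAntidiagonal (m + 1)}) where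
  toFun x := ⟨(x.1 + 1) * (x.2 + 1) - 1,
    ⟨(x.1 + 1, x.2 + 1), by
      rw [Nat.mem_divisorsAntidiagonal]
      have h1 : 1 ≤ (x.1 + 1) * (x.2 + 1) := Nat.one_le_iff_ne_zero.mpr
        (Nat.mul_ne_zero (Nat.succ_ne_zero _) (Nat.succ_ne_zero _))
      exact ⟨by dsimp only; omega, by omega⟩⟩⟩
  invFun y := (y.2.1.1 - 1, y.2.1.2 - 1)
  left_inv x := by simp
  right_inv y := by
    obtain ⟨m, ⟨⟨d, e⟩, h⟩⟩ := y
    rw [Nat.mem_divisorsAntidiagonal] at h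
    obtain ⟨h1, -⟩ := h
    have hd : 1 ≤ d := Nat.one_le_iff_ne_zero.mpr (by rintro rfl; simp at h1)
    have he : 1 ≤ e := Nat.one_le_iff_ne_zero.mpr (by rintro rfl; simp at h1)
    have h2 : (d - 1 + 1) * (e - 1 + 1) - 1 = m := by
      rw [Nat.sub_add_cancel hd, Nat.sub_add_cancel he, h1]; omega
    subst h2
    simp [Nat.sub_add_cancel hd, Nat.sub_add_cancel he]

set_option maxHeartbeats 1000000 in
lemma perprime (x : ℝ)
    (hsum : Summable (fun kn : ℕ × ℕ =>
      ((moebius (kn.1 + 1) : ℤ) : ℝ) * x ^ ((kn.1 + 1) * (kn.2 + 1)) /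
        (((kn.1 : ℝ) + 1) * ((kn.2 : ℝ) + 1)))) :
    (∑' kn : ℕ × ℕ, ((moebius (kn.1 + 1) : ℤ) : ℝ) * x ^ ((kn.1 + 1) * (kn.2 + 1)) /
        (((kn.1 : ℝ) + 1) * ((kn.2 : ℝ) + 1))) = x := by
  set f : ℕ × ℕ → ℝ := fun kn =>
    ((moebius (kn.1 + 1) : ℤ) : ℝ) * x ^ ((kn.1 + 1) * (kn.2 + 1)) /
      (((kn.1 : ℝ) + 1) * ((kn.2 : ℝ) + 1)) with hf
  rw [← divEquiv.symm.tsum_eq f]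
  have hg : Summable (fun y : Σ m : ℕ, {d : ℕ × ℕ // d ∈ Nat.divisorsAntidiagonal (m + 1)} =>
      f (divEquiv.symm y)) := divEquiv.symm.summable_iff.mpr hsum
  rw [Summable.tsum_sigma' (fun m => hg.sigma_factor m) hg]
  have key : ∀ m : ℕ, (∑' c : {d : ℕ × ℕ // d ∈ Nat.divisorsAntidiagonal (m + 1)},
      f (divEquiv.symm ⟨m, c⟩)) = if m = 0 then x else 0 := by
    intro m
    have step1 : (∑' c : {d : ℕ × ℕ // d ∈ Nat.divisorsAntidiagonal (m + 1)},
        f (divEquiv.symm ⟨m, c⟩)) =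
        ∑ de ∈ Nat.divisorsAntidiagonal (m + 1),
          ((moebius de.1 : ℤ) : ℝ) * x ^ (m + 1) / (m + 1) := by
      rw [← Finset.tsum_subtype (Nat.divisorsAntidiagonal (m + 1))
        (fun de => ((moebius de.1 : ℤ) : ℝ) * x ^ (m + 1) / (m + 1))]
      refine tsum_congr fun c => ?_
      obtain ⟨⟨d, e⟩, hde⟩ := c
      rw [Nat.mem_divisorsAntidiagonal] at hde
      obtain ⟨hde1, -⟩ := hde
      have hd : 1 ≤ d := Nat.one_le_iff_ne_zero.mpr (by rintro rfl; simp at hde1)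
      have he : 1 ≤ e := Nat.one_le_iff_ne_zero.mpr (by rintro rfl; simp at hde1)
      show f (d - 1, e - 1) = _
      rw [hf]
      simp only
      rw [Nat.sub_add_cancel hd, Nat.sub_add_cancel he]
      have hcd : ((d - 1 : ℕ) : ℝ) + 1 = (d : ℝ) := by
        rw [Nat.cast_sub hd]; ring
      have hce : ((e - 1 : ℕ) : ℝ) + 1 = (e : ℝ) := by
        rw [Nat.cast_sub he]; ring
      have hde2 : ((d : ℝ)) * ((e : ℝ)) = (m : ℝ) + 1 := by exact_mod_cast hde1
      rw [hcd, hce, hde1, hde2]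
    rw [step1]
    rw [← Finset.sum_div, ← Finset.sum_mul]
    have hmoeb : (∑ de ∈ Nat.divisorsAntidiagonal (m + 1), ((moebius de.1 : ℤ) : ℝ)) =
        if m = 0 then 1 else 0 := by
      rw [Nat.sum_divisorsAntidiagonal (fun a _ => ((moebius a : ℤ) : ℝ))]
      have h2 : ((moebius * ArithmeticFunction.zeta : ArithmeticFunction ℤ) (m + 1) : ℝ) =
          (((1 : ArithmeticFunction ℤ) (m + 1) : ℤ) : ℝ) := by
        rw [moebius_mul_coe_zeta]
      rw [coe_mul_zeta_apply] at h2
      push_cast at h2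
      rw [h2, one_apply]
      simp [Nat.add_eq_right]
    rw [hmoeb]
    split_ifs with hm
    · subst hm; norm_num
    · simp
  rw [tsum_congr key, tsum_ite_eq]

set_option maxHeartbeats 2000000 in
theorem primeZeta_eq_moebius_sum (s : ℝ) (hs : 1 < s) :
    (∑' p : Nat.Primes, ((p : ℕ) : ℝ) ^ (-s)) =
      ∑' k : ℕ,
        ((ArithmeticFunction.moebius (k + 1) : ℤ) : ℝ) *
          Real.log (∑' m : ℕ, ((m : ℝ) + 1) ^ (-(s * ((k : ℝ) + 1)))) / ((k : ℝ) + 1) := by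
  classical
  set F : Nat.Primes × (ℕ × ℕ) → ℝ := fun q =>
    ((moebius (q.2.1 + 1) : ℤ) : ℝ) *
      (((q.1 : ℕ) : ℝ) ^ (-s)) ^ ((q.2.1 + 1) * (q.2.2 + 1)) /
      (((q.2.1 : ℝ) + 1) * ((q.2.2 : ℝ) + 1)) with hF
  -- summability of F
  have hxpos : ∀ p : Nat.Primes, (0 : ℝ) ≤ ((p : ℕ) : ℝ) ^ (-s) := fun p => by positivity
  have hxhalf : ∀ p : Nat.Primes, ((p : ℕ) : ℝ) ^ (-s) ≤ 1 / 2 := prime_rpow_le_half hs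
  have hH : Summable (fun q : Nat.Primes × (ℕ × ℕ) =>
      ((q.1 : ℕ) : ℝ) ^ (-s) * ((1 / 2 : ℝ) ^ q.2.1 * (1 / 2 : ℝ) ^ q.2.2)) := by
    have hgeom : Summable (fun n : ℕ => (1 / 2 : ℝ) ^ n) :=
      summable_geometric_of_lt_one (by norm_num) (by norm_num)
    have h2 : Summable (fun kn : ℕ × ℕ => (1 / 2 : ℝ) ^ kn.1 * (1 / 2 : ℝ) ^ kn.2) :=
      hgeom.mul_of_nonneg hgeom (fun n => by positivity) (fun n => by positivity)
    exact (Nat.Primes.summable_rpow.mpr (by linarith)).mul_of_nonneg h2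
      (fun p => hxpos p) (fun kn => by positivity)
  have hFle : ∀ q : Nat.Primes × (ℕ × ℕ), ‖F q‖ ≤
      ((q.1 : ℕ) : ℝ) ^ (-s) * ((1 / 2 : ℝ) ^ q.2.1 * (1 / 2 : ℝ) ^ q.2.2) := by
    rintro ⟨p, k, n⟩
    set x := ((p : ℕ) : ℝ) ^ (-s) with hx
    have hx0 : (0 : ℝ) ≤ x := hxpos p
    have hx2 : x ≤ 1 / 2 := hxhalf p
    have hden : (1 : ℝ) ≤ ((k : ℝ) + 1) * ((n : ℝ) + 1) := by
      have h1 : (0 : ℝ) ≤ (k : ℝ) := Nat.cast_nonneg k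
      have h2 : (0 : ℝ) ≤ (n : ℝ) := Nat.cast_nonneg n
      nlinarith
    have hnorm : ‖F (p, k, n)‖ ≤ x ^ ((k + 1) * (n + 1)) := by
      rw [hF]
      simp only
      rw [Real.norm_eq_abs, abs_div, abs_mul]
      have hmu : |((moebius (k + 1) : ℤ) : ℝ)| ≤ 1 := by
        have := abs_moebius_le_one (n := k + 1)
        exact_mod_cast (by exact_mod_cast this : |((moebius (k + 1) : ℤ) : ℝ)| ≤ 1)
      have habs : |x ^ ((k + 1) * (n + 1))| = x ^ ((k + 1) * (n + 1)) :=
        abs_of_nonneg (by positivity)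
      have hdenabs : |((k : ℝ) + 1) * ((n : ℝ) + 1)| = ((k : ℝ) + 1) * ((n : ℝ) + 1) :=
        abs_of_nonneg (by positivity)
      rw [habs, hdenabs]
      calc |((moebius (k + 1) : ℤ) : ℝ)| * x ^ ((k + 1) * (n + 1)) /
            (((k : ℝ) + 1) * ((n : ℝ) + 1))
          ≤ 1 * x ^ ((k + 1) * (n + 1)) / 1 := by
            apply div_le_div₀ (by positivity)
              (mul_le_mul_of_nonneg_right hmu (by positivity)) one_pos hden
        _ = x ^ ((k + 1) * (n + 1)) := by ring
    refine hnorm.trans ?_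
    calc x ^ ((k + 1) * (n + 1)) ≤ x ^ (1 + k + n) := by
          apply pow_le_pow_of_le_one hx0 (by linarith) (by nlinarith)
      _ = x * (x ^ k * x ^ n) := by ring
      _ ≤ x * ((1 / 2 : ℝ) ^ k * (1 / 2 : ℝ) ^ n) := by
          apply mul_le_mul_of_nonneg_left _ hx0
          exact mul_le_mul (pow_le_pow_left₀ hx0 hx2 k) (pow_le_pow_left₀ hx0 hx2 n)
            (by positivity) (by positivity)
  have hFsum : Summable F := Summable.of_norm_bounded hH hFle
  -- Left side: sum over primes first
  have hL : (∑' q, F q) = ∑' p : Nat.Primes, ((p : ℕ) : ℝ) ^ (-s) := by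
    rw [Summable.tsum_prod hFsum]
    refine tsum_congr fun p => ?_
    have hslice : Summable (fun kn : ℕ × ℕ => F (p, kn)) := hFsum.prod_factor p
    exact perprime (((p : ℕ) : ℝ) ^ (-s)) hslice
  -- Right side: sum over k first
  have hFe : Summable (fun r => F (tripleEquiv r)) := tripleEquiv.summable_iff.mpr hFsum
  have hR : (∑' q, F q) = ∑' k : ℕ,
      ((moebius (k + 1) : ℤ) : ℝ) *
        Real.log (∑' m : ℕ, ((m : ℝ) + 1) ^ (-(s * ((k : ℝ) + 1)))) / ((k : ℝ) + 1) := by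
    rw [← tripleEquiv.tsum_eq F, Summable.tsum_prod hFe]
    refine tsum_congr fun k => ?_
    have ht : 1 < s * ((k : ℝ) + 1) := by
      have h1 : (0 : ℝ) ≤ (k : ℝ) := Nat.cast_nonneg k
      nlinarith
    -- the inner function
    have hrw : ∀ pn : Nat.Primes × ℕ, F (tripleEquiv (k, pn)) =
        (((moebius (k + 1) : ℤ) : ℝ) / ((k : ℝ) + 1)) *
          ((((pn.1 : ℕ) : ℝ) ^ (-(s * ((k : ℝ) + 1)))) ^ (pn.2 + 1) / ((pn.2 : ℝ) + 1)) := by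
      rintro ⟨p, n⟩
      show ((moebius (k + 1) : ℤ) : ℝ) *
          (((p : ℕ) : ℝ) ^ (-s)) ^ ((k + 1) * (n + 1)) /
          (((k : ℝ) + 1) * ((n : ℝ) + 1)) =
        (((moebius (k + 1) : ℤ) : ℝ) / ((k : ℝ) + 1)) *
          ((((p : ℕ) : ℝ) ^ (-(s * ((k : ℝ) + 1)))) ^ (n + 1) / ((n : ℝ) + 1))
      have hbase : (((p : ℕ) : ℝ) ^ (-s)) ^ (k + 1) =
          ((p : ℕ) : ℝ) ^ (-(s * ((k : ℝ) + 1))) := by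
        rw [← Real.rpow_natCast (((p : ℕ) : ℝ) ^ (-s)) (k + 1),
          ← Real.rpow_mul (by positivity)]
        congr 1
        push_cast
        ring
      rw [pow_mul, hbase]
      field_simp
      try ring
    rw [tsum_congr hrw, tsum_mul_left]
    rcases eq_or_ne ((moebius (k + 1) : ℤ) : ℝ) 0 with hmu | hmu
    · rw [hmu]; simp
    -- summability of the inner function
    have hslice : Summable (fun pn : Nat.Primes × ℕ => F (tripleEquiv (k, pn))) := hFe.prod_factor k
    rw [funext hrw] at hslice
    have hinner : Summable (fun pn : Nat.Primes × ℕ =>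
        (((pn.1 : ℕ) : ℝ) ^ (-(s * ((k : ℝ) + 1)))) ^ (pn.2 + 1) / ((pn.2 : ℝ) + 1)) := by
      have hc : (((moebius (k + 1) : ℤ) : ℝ) / ((k : ℝ) + 1)) ≠ 0 := by
        apply div_ne_zero hmu
        positivity
      have := hslice.div_const (((moebius (k + 1) : ℤ) : ℝ) / ((k : ℝ) + 1))
      refine this.congr fun pn => ?_
      field_simp
      try ring
    have hps : ∀ p : Nat.Primes, (∑' n : ℕ,
        (((p : ℕ) : ℝ) ^ (-(s * ((k : ℝ) + 1)))) ^ (n + 1) / ((n : ℝ) + 1)) =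
        -Real.log (1 - ((p : ℕ) : ℝ) ^ (-(s * ((k : ℝ) + 1)))) := by
      intro p
      have habs : |((p : ℕ) : ℝ) ^ (-(s * ((k : ℝ) + 1)))| < 1 := by
        rw [abs_of_nonneg (by positivity)]
        exact prime_rpow_lt_one ht p
      have := Real.hasSum_pow_div_log_of_abs_lt_one habs
      rw [← this.tsum_eq]
    rw [Summable.tsum_prod hinner, tsum_congr hps, ← log_zetaR ht]
    try ring
  rw [← hL, hR]
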